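/- For k ≥ 2, in Δ^L_{k,1} with the edge a_1–b_1 and/or the edge a_1–b_{k+1} removed, the distance from c to b_1 (respectively b_{k+1}) becomes 3 when the respective edge is removed and the graph has diameter 3; moreover with the partition ρ_1 ∪ ρ_2 = {c, a_1,…,a_k} and ρ_3 ∪ ρ_4 equal to the b-vertices one has |ρ_1 ∪ ρ_2| = k+1, |ρ_3 ∪ ρ_4| = k+1, and k+1 < 2^(k+1), violating the diameter-three bound |ρ_3 ∪ ρ_4| ≥ 2^{|ρ_1 ∪ ρ_2|}. -/

import Mathlib

inductive V (k n : ℕ) where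
  | c : V k n
  | a : Fin k → V k n
  | b : Fin (k + n) → V k n
deriving DecidableEq, Fintype

def adj (k n : ℕ) : V k n → V k n → Prop
  | .a i, .a j => i ≠ j
  | .b i, .b j => i ≠ j
  | .a i, .b j => (j : ℕ) = (i : ℕ) ∨ (j : ℕ) = k + i
  | .b j, .a i => (j : ℕ) = (i : ℕ) ∨ (j : ℕ) = k + i
  | .c, .a _ => True
  | .a _, .c => True
  | _, _ => False

instance (k n : ℕ) : DecidableRel (adj k n) := fun x y => by
  cases x <;> cases y <;> simp only [adj] <;> infer_instance

def DeltaL (k n : ℕ) : SimpleGraph (V k n) where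
  Adj := adj k n
  symm := by
    constructor
    intro x y h
    cases x <;> cases y <;> simp_all [adj] <;> tauto
  loopless := by
    constructor
    intro x h
    cases x <;> simp_all [adj]

lemma walk_three_le {α : Type*} {G : SimpleGraph α} {x y : α} (hne : x ≠ y)
    (h1 : ¬G.Adj x y) (h2 : ∀ z, G.Adj x z → ¬G.Adj z y) (p : G.Walk x y) :
    3 ≤ p.length := by
  cases p with
  | nil => exact absurd rfl hne
  | cons h q =>
    cases q with
    | nil => exact absurd h h1
    | cons h' q' =>
      cases q' with
      | nil => exact absurd h' (h2 _ h)
      | cons h'' q'' =>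
        simp only [SimpleGraph.Walk.length_cons]
        omega

lemma dist_eq_three {α : Type*} {G : SimpleGraph α} {x y : α} (hne : x ≠ y)
    (h1 : ¬G.Adj x y) (h2 : ∀ z, G.Adj x z → ¬G.Adj z y) (p : G.Walk x y)
    (hp : p.length = 3) : G.dist x y = 3 := by
  have hle : G.dist x y ≤ 3 := hp ▸ SimpleGraph.dist_le p
  obtain ⟨q, hq⟩ := SimpleGraph.Reachable.exists_walk_length_eq_dist ⟨p⟩
  have := walk_three_le hne h1 h2 q
  omega

theorem stmt15 (k : ℕ) (hk : 2 ≤ k) :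
    (((DeltaL k 1).deleteEdges {s(V.a ⟨0, by omega⟩, V.b ⟨0, by omega⟩)}).dist
        V.c (V.b ⟨0, by omega⟩) = 3) ∧
    (((DeltaL k 1).deleteEdges {s(V.a ⟨0, by omega⟩, V.b (Fin.last k))}).dist
        V.c (V.b (Fin.last k)) = 3) ∧
    (((DeltaL k 1).deleteEdges
        {s(V.a ⟨0, by omega⟩, V.b ⟨0, by omega⟩),
         s(V.a ⟨0, by omega⟩, V.b (Fin.last k))}).dist V.c (V.b ⟨0, by omega⟩) = 3) ∧
    ({z : V k 1 | z = V.c ∨ ∃ i, z = V.a i}.ncard = k + 1) ∧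
    ({z : V k 1 | ∃ j, z = V.b j}.ncard = k + 1) ∧
    (k + 1 < 2 ^ (k + 1)) := by
  have hk0 : (0 : ℕ) < k := by omega
  have hk1 : (1 : ℕ) < k := by omega
  -- vertices
  set a0 : V k 1 := V.a ⟨0, hk0⟩ with ha0
  set a1 : V k 1 := V.a ⟨1, hk1⟩ with ha1
  set b0 : V k 1 := V.b ⟨0, by omega⟩ with hb0
  set b1 : V k 1 := V.b ⟨1, by omega⟩ with hb1
  set bl : V k 1 := V.b (Fin.last k) with hbl
  refine ⟨?_, ?_, ?_, ?_, ?_, ?_⟩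
  · -- delete a0-b0, dist c b0 = 3 via c-a1-b1-b0
    set G := (DeltaL k 1).deleteEdges {s(V.a ⟨0, hk0⟩, V.b ⟨0, by omega⟩)} with hG
    have e1 : G.Adj V.c a1 := by
      simp [hG, SimpleGraph.deleteEdges_adj, DeltaL, adj, ha1, Sym2.eq_iff]
    have e2 : G.Adj a1 b1 := by
      simp [hG, SimpleGraph.deleteEdges_adj, DeltaL, adj, ha1, hb1, Sym2.eq_iff]
    have e3 : G.Adj b1 b0 := by
      simp [hG, SimpleGraph.deleteEdges_adj, DeltaL, adj, hb1, hb0, Sym2.eq_iff,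
        Fin.ext_iff]
    refine dist_eq_three (by simp [hb0]) ?_ ?_
      (SimpleGraph.Walk.cons e1 (SimpleGraph.Walk.cons e2 (SimpleGraph.Walk.cons e3
        SimpleGraph.Walk.nil))) rfl
    · simp [hG, SimpleGraph.deleteEdges_adj, DeltaL, adj, hb0]
    · intro z hz hz'
      rw [hG, SimpleGraph.deleteEdges_adj] at hz hz'
      cases z with
      | c => exact (DeltaL k 1).irrefl hz.1
      | b j => exact hz.1
      | a i =>
        obtain ⟨hadj, hne⟩ := hz'
        have : (0 : ℕ) = (i : ℕ) ∨ (0 : ℕ) = k + i := hadj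
        have hi : (i : ℕ) = 0 := by omega
        have heq : V.a i = (V.a ⟨0, hk0⟩ : V k 1) := by congr 1; exact Fin.ext hi
        apply hne; rw [heq]; simp [hb0, hbl, Fin.ext_iff]
  · -- delete a0-blast, dist c blast = 3 via c-a0-b0-blast
    set G := (DeltaL k 1).deleteEdges {s(V.a ⟨0, hk0⟩, V.b (Fin.last k))} with hG
    have e1 : G.Adj V.c a0 := by
      simp [hG, SimpleGraph.deleteEdges_adj, DeltaL, adj, ha0, Sym2.eq_iff]
    have e2 : G.Adj a0 b0 := by
      simp [hG, SimpleGraph.deleteEdges_adj, DeltaL, adj, ha0, hb0, Sym2.eq_iff,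
        Fin.ext_iff, Fin.last]
      omega
    have e3 : G.Adj b0 bl := by
      simp [hG, SimpleGraph.deleteEdges_adj, DeltaL, adj, hb0, hbl, Sym2.eq_iff,
        Fin.ext_iff, Fin.last]
      omega
    refine dist_eq_three (by simp [hbl]) ?_ ?_
      (SimpleGraph.Walk.cons e1 (SimpleGraph.Walk.cons e2 (SimpleGraph.Walk.cons e3
        SimpleGraph.Walk.nil))) rfl
    · simp [hG, SimpleGraph.deleteEdges_adj, DeltaL, adj, hbl]
    · intro z hz hz'
      rw [hG, SimpleGraph.deleteEdges_adj] at hz hz'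
      cases z with
      | c => exact (DeltaL k 1).irrefl hz.1
      | b j => exact hz.1
      | a i =>
        obtain ⟨hadj, hne⟩ := hz'
        have h' : ((Fin.last k : Fin (k+1)) : ℕ) = (i : ℕ) ∨
            ((Fin.last k : Fin (k+1)) : ℕ) = k + i := hadj
        simp only [Fin.val_last] at h'
        have hik : (i : ℕ) < k := i.isLt
        have hi : (i : ℕ) = 0 := by omega
        have heq : V.a i = (V.a ⟨0, hk0⟩ : V k 1) := by congr 1; exact Fin.ext hi
        apply hne; rw [heq]; simp [hb0, hbl, Fin.ext_iff]
  · -- delete both, dist c b0 = 3 via c-a1-b1-b0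
    set G := (DeltaL k 1).deleteEdges
        {s(V.a ⟨0, hk0⟩, V.b ⟨0, by omega⟩), s(V.a ⟨0, hk0⟩, V.b (Fin.last k))} with hG
    have e1 : G.Adj V.c a1 := by
      simp [hG, SimpleGraph.deleteEdges_adj, DeltaL, adj, ha1, Sym2.eq_iff]
    have e2 : G.Adj a1 b1 := by
      simp [hG, SimpleGraph.deleteEdges_adj, DeltaL, adj, ha1, hb1, Sym2.eq_iff,
        Fin.ext_iff]
    have e3 : G.Adj b1 b0 := by
      simp [hG, SimpleGraph.deleteEdges_adj, DeltaL, adj, hb1, hb0, Sym2.eq_iff,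
        Fin.ext_iff]
    refine dist_eq_three (by simp [hb0]) ?_ ?_
      (SimpleGraph.Walk.cons e1 (SimpleGraph.Walk.cons e2 (SimpleGraph.Walk.cons e3
        SimpleGraph.Walk.nil))) rfl
    · simp [hG, SimpleGraph.deleteEdges_adj, DeltaL, adj, hb0]
    · intro z hz hz'
      rw [hG, SimpleGraph.deleteEdges_adj] at hz hz'
      cases z with
      | c => exact (DeltaL k 1).irrefl hz.1
      | b j => exact hz.1
      | a i =>
        obtain ⟨hadj, hne⟩ := hz'
        have : (0 : ℕ) = (i : ℕ) ∨ (0 : ℕ) = k + i := hadj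
        have hi : (i : ℕ) = 0 := by omega
        have heq : V.a i = (V.a ⟨0, hk0⟩ : V k 1) := by congr 1; exact Fin.ext hi
        apply hne; rw [heq]; simp [hb0, hbl, Fin.ext_iff]
  · -- cardinality of {c} ∪ a's
    have : {z : V k 1 | z = V.c ∨ ∃ i, z = V.a i} =
        insert V.c (Set.range (V.a : Fin k → V k 1)) := by
      ext z; simp [eq_comm, Set.range]
    rw [this, Set.ncard_insert_of_notMem (by simp) (Set.finite_range _)]
    have hinj : Function.Injective (V.a : Fin k → V k 1) := fun i j h => by injection h
    rw [← Set.image_univ, Set.ncard_image_of_injective _ hinj, Set.ncard_univ]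
    simp
  · have : {z : V k 1 | ∃ j, z = V.b j} = Set.range (V.b : Fin (k+1) → V k 1) := by
      ext z; simp [eq_comm, Set.range]
    have hinj : Function.Injective (V.b : Fin (k+1) → V k 1) := fun i j h => by injection h
    rw [this, ← Set.image_univ, Set.ncard_image_of_injective _ hinj, Set.ncard_univ]
    simp
  · exact Nat.lt_two_pow_self
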